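/- Suppose m ≥ 2, all of G^j, H^j_{l₁}, L^j_{l₁,l₂}, M_{l₁,l₂}, Θ⁰, Θ¹, …, Θ^m are continuously differentiable on an open set U ⊆ ℝ^{1+m}, and the functions Π^j_{l₁,l₂} defined by (3.64) satisfy the compatibility conditions (3.61) at every point of U. Then for all l₁, l₂ ∈ {1, …, m}, the following four formulas hold on U (Σ_k denotes Σ_{k=1}^m): (3.99) ∂_x Θ⁰ = −2∂_{y^{l₁}}G^{l₁} + ∂_x H^{l₁}_{l₁} + 2Σ_k G^k L^{l₁}_{l₁,k} − Σ_k G^k L^k_{k,k} − (1/2)Σ_k H^k_{l₁}H^{l₁}_k − Σ_k G^k Θ^k + (1/2)Θ⁰·Θ⁰; (3.100) ∂_{y^{l₁}}Θ⁰ = (2/3)∂_x L^{l₁}_{l₁,l₁} − (1/3)∂_{y^{l₁}}H^{l₁}_{l₁} + (2/3)G^{l₁}M_{l₁,l₁} + (4/3)Σ_k G^k M_{l₁,k} − (1/3)Σ_k H^{l₁}_k L^k_{l₁,l₁} + (1/3)Σ_k H^k_{l₁} L^{l₁}_{l₁,k} − (1/2)Σ_k H^k_{l₁} L^k_{k,k}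 − (1/2)Σ_k H^k_{l₁} Θ^k + (1/2)L^{l₁}_{l₁,l₁}·Θ⁰ + (1/2)Θ⁰·Θ^{l₁}; (3.101) ∂_x Θ^{l₁} = −(2/3)∂_{y^{l₁}}H^{l₁}_{l₁} + (1/3)∂_x L^{l₁}_{l₁,l₁} + (4/3)G^{l₁}M_{l₁,l₁} + (2/3)Σ_k G^k M_{l₁,k} − (2/3)Σ_k H^{l₁}_k L^k_{l₁,l₁} + (2/3)Σ_k H^k_{l₁} L^{l₁}_{l₁,k} − (1/2)Σ_k H^k_{l₁} L^k_{k,k} − (1/2)Σ_k H^k_{l₁} Θ^k + (1/2)L^{l₁}_{l₁,l₁}·Θ⁰ + (1/2)Θ⁰·Θ^{l₁}; (3.102) ∂_{y^{l₂}}Θ^{l₁} = −∂_{y^{l₂}}L^{l₁}_{l₁,l₁} + 2∂_x M_{l₁,l₂} + Σ_k H^k_{l₁} M_{l₂,k} + (1/2)L^{l₁}_{l₁,l₁}·L^{l₂}_{l₂,l₂} − Σ_k L^k_{l₁,l₂} L^k_{k,k} + (1/2)L^{l₁}_{l₁,l₁}·Θ^{l₂} + (1/2)L^{l₂}_{l₂,l₂}·Θ^{l₁}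 − Σ_k L^k_{l₁,l₂} Θ^k + M_{l₁,l₂}·Θ⁰ + (1/2)Θ^{l₁}·Θ^{l₂}. In particular, the right-hand side of (3.99) is independent of l₁ and those of (3.100)–(3.101) are as displayed for every l₁. -/

import Mathlib

/-- Partial derivative in the direction of the `i`-th coordinate `y^i`
(with the convention `y⁰ ≡ x`) of a function on `ℝ^{1+m}`. -/
noncomputable def pd (m : ℕ) (i : Fin (m + 1)) (f : (Fin (m + 1) → ℝ) → ℝ) :
    (Fin (m + 1) → ℝ) → ℝ :=
  fun z => fderiv ℝ f z (Pi.single i 1)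

/-- The functions `Π^j_{l₁,l₂}` of equation (3.64), built from
`G^j, H^j_{l₁}, L^j_{l₁,l₂}, M_{l₁,l₂}` and the principal unknowns
`Θ⁰, Θ¹, …, Θ^m`.  Indices `0` correspond to `x = y⁰`, and index `a+1`
corresponds to `y^{a+1}`. -/
noncomputable def Pi3 (m : ℕ)
    (G : Fin m → (Fin (m + 1) → ℝ) → ℝ)
    (H : Fin m → Fin m → (Fin (m + 1) → ℝ) → ℝ)
    (L : Fin m → Fin m → Fin m → (Fin (m + 1) → ℝ) → ℝ)
    (M : Fin m → Fin m → (Fin (m + 1) → ℝ) → ℝ)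
    (Θ : Fin (m + 1) → (Fin (m + 1) → ℝ) → ℝ) :
    Fin (m + 1) → Fin (m + 1) → Fin (m + 1) → (Fin (m + 1) → ℝ) → ℝ :=
  Fin.cons
    -- j = 0
    (Fin.cons
      -- l₁ = 0
      (Fin.cons (Θ 0)
        (fun b z => (1/2) * L b b b z + (1/2) * Θ b.succ z))
      -- l₁ = a + 1
      (fun a => Fin.cons
        (fun z => (1/2) * L a a a z + (1/2) * Θ a.succ z)
        (fun b => M a b)))
    -- j = i + 1
    (fun i => Fin.cons
      (Fin.cons (fun z => -(G i z))
        (fun b z => -(1/2) * H i b z + (1/2) * (if i = b then 1 else 0) * Θ 0 z))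
      (fun a => Fin.cons
        (fun z => -(1/2) * H i a z + (1/2) * (if i = a then 1 else 0) * Θ 0 z)
        (fun b z =>
          -(L i a b z) + (1/2) * (if i = a then 1 else 0) * L b b b z
            + (1/2) * (if i = b then 1 else 0) * L a a a z
            + (1/2) * (if i = a then 1 else 0) * Θ b.succ z
            + (1/2) * (if i = b then 1 else 0) * Θ a.succ z)))

lemma pd_comb {m : ℕ} (i : Fin (m+1)) (c d : ℝ) (f g : (Fin (m+1) → ℝ) → ℝ)
    (z : Fin (m+1) → ℝ) (hf : DifferentiableAt ℝ f z) (hg : DifferentiableAt ℝ g z) :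
    pd m i (fun w => c * f w + d * g w) z = c * pd m i f z + d * pd m i g z := by
  unfold pd
  rw [fderiv_fun_add ((hf.const_mul c)) ((hg.const_mul d)), fderiv_const_mul hf c,
    fderiv_const_mul hg d]
  simp

lemma pd_neg {m : ℕ} (i : Fin (m+1)) (f : (Fin (m+1) → ℝ) → ℝ) (z : Fin (m+1) → ℝ) :
    pd m i (fun w => -(f w)) z = -pd m i f z := by
  unfold pd
  rw [fderiv_fun_neg]
  simp

/-- If the functions `Π^j_{l₁,l₂}` of (3.64) satisfy the compatibility conditions
(3.61), then all first-order derivatives of the principal unknowns `Θ⁰, Θ^{l₁}`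
are given by the explicit formulas (3.99)–(3.102). -/
theorem principal_unknowns_first_derivatives (m : ℕ) (hm : 2 ≤ m)
    (U : Set (Fin (m + 1) → ℝ)) (hU : IsOpen U)
    (G : Fin m → (Fin (m + 1) → ℝ) → ℝ)
    (H : Fin m → Fin m → (Fin (m + 1) → ℝ) → ℝ)
    (L : Fin m → Fin m → Fin m → (Fin (m + 1) → ℝ) → ℝ)
    (M : Fin m → Fin m → (Fin (m + 1) → ℝ) → ℝ)
    (Θ : Fin (m + 1) → (Fin (m + 1) → ℝ) → ℝ)
    (hLsym : ∀ j a b, L j a b = L j b a)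
    (hMsym : ∀ a b, M a b = M b a)
    (hGd : ∀ j, ContDiffOn ℝ 1 (G j) U)
    (hHd : ∀ j a, ContDiffOn ℝ 1 (H j a) U)
    (hLd : ∀ j a b, ContDiffOn ℝ 1 (L j a b) U)
    (hMd : ∀ a b, ContDiffOn ℝ 1 (M a b) U)
    (hΘd : ∀ i, ContDiffOn ℝ 1 (Θ i) U)
    (hcompat : ∀ (j l₁ l₂ l₃ : Fin (m + 1)), ∀ z ∈ U,
      pd m l₃ (Pi3 m G H L M Θ j l₁ l₂) z - pd m l₂ (Pi3 m G H L M Θ j l₁ l₃) z =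
        -(∑ k : Fin (m + 1), Pi3 m G H L M Θ k l₁ l₂ z * Pi3 m G H L M Θ j l₃ k z) +
          ∑ k : Fin (m + 1), Pi3 m G H L M Θ k l₁ l₃ z * Pi3 m G H L M Θ j l₂ k z) :
    ∀ (l₁ l₂ : Fin m), ∀ z ∈ U,
      -- (3.99)
      (pd m 0 (Θ 0) z =
        -2 * pd m l₁.succ (G l₁) z + pd m 0 (H l₁ l₁) z
          + 2 * ∑ k : Fin m, G k z * L l₁ l₁ k z
          - ∑ k : Fin m, G k z * L k k k z
          - (1/2) * ∑ k : Fin m, H k l₁ z * H l₁ k z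
          - ∑ k : Fin m, G k z * Θ k.succ z
          + (1/2) * Θ 0 z * Θ 0 z) ∧
      -- (3.100)
      (pd m l₁.succ (Θ 0) z =
        (2/3) * pd m 0 (L l₁ l₁ l₁) z - (1/3) * pd m l₁.succ (H l₁ l₁) z
          + (2/3) * G l₁ z * M l₁ l₁ z
          + (4/3) * ∑ k : Fin m, G k z * M l₁ k z
          - (1/3) * ∑ k : Fin m, H l₁ k z * L k l₁ l₁ z
          + (1/3) * ∑ k : Fin m, H k l₁ z * L l₁ l₁ k z
          - (1/2) * ∑ k : Fin m, H k l₁ z * L k k k z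
          - (1/2) * ∑ k : Fin m, H k l₁ z * Θ k.succ z
          + (1/2) * L l₁ l₁ l₁ z * Θ 0 z
          + (1/2) * Θ 0 z * Θ l₁.succ z) ∧
      -- (3.101)
      (pd m 0 (Θ l₁.succ) z =
        -(2/3) * pd m l₁.succ (H l₁ l₁) z + (1/3) * pd m 0 (L l₁ l₁ l₁) z
          + (4/3) * G l₁ z * M l₁ l₁ z
          + (2/3) * ∑ k : Fin m, G k z * M l₁ k z
          - (2/3) * ∑ k : Fin m, H l₁ k z * L k l₁ l₁ z
          + (2/3) * ∑ k : Fin m, H k l₁ z * L l₁ l₁ k z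
          - (1/2) * ∑ k : Fin m, H k l₁ z * L k k k z
          - (1/2) * ∑ k : Fin m, H k l₁ z * Θ k.succ z
          + (1/2) * L l₁ l₁ l₁ z * Θ 0 z
          + (1/2) * Θ 0 z * Θ l₁.succ z) ∧
      -- (3.102)
      (pd m l₂.succ (Θ l₁.succ) z =
        -(pd m l₂.succ (L l₁ l₁ l₁) z) + 2 * pd m 0 (M l₁ l₂) z
          + ∑ k : Fin m, H k l₁ z * M l₂ k z
          + (1/2) * L l₁ l₁ l₁ z * L l₂ l₂ l₂ z
          - ∑ k : Fin m, L k l₁ l₂ z * L k k k z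
          + (1/2) * L l₁ l₁ l₁ z * Θ l₂.succ z
          + (1/2) * L l₂ l₂ l₂ z * Θ l₁.succ z
          - ∑ k : Fin m, L k l₁ l₂ z * Θ k.succ z
          + M l₁ l₂ z * Θ 0 z
          + (1/2) * Θ l₁.succ z * Θ l₂.succ z) := by
  intro a b z hz
  have hmem : U ∈ nhds z := hU.mem_nhds hz
  have dG : ∀ j, DifferentiableAt ℝ (G j) z := fun j =>
    ((hGd j).differentiableOn one_ne_zero).differentiableAt hmem
  have dH : ∀ j p, DifferentiableAt ℝ (H j p) z := fun j p =>
    ((hHd j p).differentiableOn one_ne_zero).differentiableAt hmem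
  have dL : ∀ j p q, DifferentiableAt ℝ (L j p q) z := fun j p q =>
    ((hLd j p q).differentiableOn one_ne_zero).differentiableAt hmem
  have dΘ : ∀ i, DifferentiableAt ℝ (Θ i) z := fun i =>
    ((hΘd i).differentiableOn one_ne_zero).differentiableAt hmem
  -- component values of Pi3
  have c1 : Pi3 m G H L M Θ 0 0 0 = Θ 0 := by simp [Pi3]
  have c2 : ∀ p : Fin m, Pi3 m G H L M Θ 0 0 p.succ
      = fun w => 1/2 * L p p p w + 1/2 * Θ p.succ w := by intro p; simp [Pi3]
  have c3 : ∀ p : Fin m, Pi3 m G H L M Θ 0 p.succ 0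
      = fun w => 1/2 * L p p p w + 1/2 * Θ p.succ w := by intro p; simp [Pi3]
  have c4 : ∀ p q : Fin m, Pi3 m G H L M Θ 0 p.succ q.succ = M p q := by
    intro p q; simp [Pi3]
  have c5 : ∀ i : Fin m, Pi3 m G H L M Θ i.succ 0 0 = fun w => -(G i w) := by
    intro i; simp [Pi3]
  have c6 : ∀ i p : Fin m, Pi3 m G H L M Θ i.succ 0 p.succ
      = fun w => -(1/2) * H i p w + 1/2 * (if i = p then (1:ℝ) else 0) * Θ 0 w := by
    intro i p; simp [Pi3]
  have c7 : ∀ i p : Fin m, Pi3 m G H L M Θ i.succ p.succ 0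
      = fun w => -(1/2) * H i p w + 1/2 * (if i = p then (1:ℝ) else 0) * Θ 0 w := by
    intro i p; simp [Pi3]
  have c8 : ∀ i p q : Fin m, Pi3 m G H L M Θ i.succ p.succ q.succ
      = fun w => -(L i p q w) + 1/2 * (if i = p then (1:ℝ) else 0) * L q q q w
          + 1/2 * (if i = q then (1:ℝ) else 0) * L p p p w
          + 1/2 * (if i = p then (1:ℝ) else 0) * Θ q.succ w
          + 1/2 * (if i = q then (1:ℝ) else 0) * Θ p.succ w := by
    intro i p q; simp [Pi3]
  have hifa : ∀ (c : Fin m) (x y : ℝ), (if c = c then x else y) = x := fun c x y => if_pos rfl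
  -- instantiate the compatibility conditions
  have EA := hcompat 0 0 0 a.succ z hz
  simp only [Fin.sum_univ_succ, c1, c2, c3, c4, c5, c6, c7, c8, hifa, if_true, mul_one] at EA
  have EB := hcompat a.succ 0 0 a.succ z hz
  simp only [Fin.sum_univ_succ, c1, c2, c3, c4, c5, c6, c7, c8, hifa, if_true, mul_one] at EB
  have EC := hcompat a.succ a.succ 0 a.succ z hz
  simp only [Fin.sum_univ_succ, c1, c2, c3, c4, c5, c6, c7, c8, hifa, if_true, mul_one] at EC
  have ED := hcompat 0 a.succ 0 b.succ z hz
  simp only [Fin.sum_univ_succ, c1, c2, c3, c4, c5, c6, c7, c8, hifa, if_true, mul_one] at ED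
  -- rewrite the partial derivatives
  rw [pd_comb (m := m) 0 (1/2) (1/2) (L a a a) (Θ a.succ) z (dL a a a) (dΘ a.succ)] at EA
  rw [pd_neg (m := m) a.succ (G a) z,
    pd_comb (m := m) 0 (-(1/2)) (1/2) (H a a) (Θ 0) z (dH a a) (dΘ 0)] at EB
  have hfun : (fun w => -L a a a w + 1 / 2 * L a a a w + 1 / 2 * L a a a w
      + 1 / 2 * Θ a.succ w + 1 / 2 * Θ a.succ w) = Θ a.succ := funext fun w => by ring
  rw [pd_comb (m := m) a.succ (-(1/2)) (1/2) (H a a) (Θ 0) z (dH a a) (dΘ 0), hfun] at EC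
  rw [pd_comb (m := m) b.succ (1/2) (1/2) (L a a a) (Θ a.succ) z (dL a a a) (dΘ a.succ)] at ED
  -- convert the sums into canonical form
  have sA1 : (∑ x : Fin m, -G x z * M a x z) = -∑ k : Fin m, G k z * M a k z := by
    rw [← Finset.sum_neg_distrib]
    exact Finset.sum_congr rfl fun x _ => by ring
  have sA2 : (∑ x : Fin m,
        (-(1 / 2) * H x a z + (1 / 2 * if x = a then 1 else 0) * Θ 0 z) *
          (1 / 2 * L x x x z + 1 / 2 * Θ x.succ z))
      = -(1/4) * (∑ k : Fin m, H k a z * L k k k z)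
        + -(1/4) * (∑ k : Fin m, H k a z * Θ k.succ z)
        + (1/4 * (Θ 0 z * L a a a z) + 1/4 * (Θ 0 z * Θ a.succ z)) := by
    have hpt : ∀ x : Fin m,
        (-(1 / 2) * H x a z + (1 / 2 * if x = a then 1 else 0) * Θ 0 z) *
          (1 / 2 * L x x x z + 1 / 2 * Θ x.succ z)
        = -(1/4) * (H x a z * L x x x z) + -(1/4) * (H x a z * Θ x.succ z)
          + (if x = a then 1/4 * (Θ 0 z * L a a a z) + 1/4 * (Θ 0 z * Θ a.succ z) else 0) := by
      intro x
      by_cases h : x = a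
      · simp [h]; try ring
      · simp [h]; try ring
    rw [Finset.sum_congr rfl fun x _ => hpt x]
    simp only [Finset.sum_add_distrib, ← Finset.mul_sum, Finset.sum_ite_eq', Finset.mem_univ,
      if_true]
  have sB1 : (∑ x : Fin m,
        -G x z * (-L a a x z + 1 / 2 * L x x x z + (1 / 2 * if a = x then 1 else 0) * L a a a z
          + 1 / 2 * Θ x.succ z + (1 / 2 * if a = x then 1 else 0) * Θ a.succ z))
      = (∑ k : Fin m, G k z * L a a k z)
        + -(1/2) * (∑ k : Fin m, G k z * L k k k z)
        + -(1/2) * (∑ k : Fin m, G k z * Θ k.succ z)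
        + (-(1/2) * (G a z * L a a a z) + -(1/2) * (G a z * Θ a.succ z)) := by
    have hpt : ∀ x : Fin m,
        -G x z * (-L a a x z + 1 / 2 * L x x x z + (1 / 2 * if a = x then 1 else 0) * L a a a z
          + 1 / 2 * Θ x.succ z + (1 / 2 * if a = x then 1 else 0) * Θ a.succ z)
        = G x z * L a a x z + -(1/2) * (G x z * L x x x z) + -(1/2) * (G x z * Θ x.succ z)
          + (if x = a then -(1/2) * (G a z * L a a a z) + -(1/2) * (G a z * Θ a.succ z)
              else 0) := by
      intro x
      by_cases h : x = a
      · simp [h]; try ring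
      · simp [h, Ne.symm h]; try ring
    rw [Finset.sum_congr rfl fun x _ => hpt x]
    simp only [Finset.sum_add_distrib, ← Finset.mul_sum, Finset.sum_ite_eq', Finset.mem_univ,
      if_true]
  have sB2 : (∑ x : Fin m,
        (-(1 / 2) * H x a z + (1 / 2 * if x = a then 1 else 0) * Θ 0 z) *
          (-(1 / 2) * H a x z + (1 / 2 * if a = x then 1 else 0) * Θ 0 z))
      = (1/4) * (∑ k : Fin m, H k a z * H a k z)
        + (-(1/2) * (H a a z * Θ 0 z) + 1/4 * (Θ 0 z * Θ 0 z)) := by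
    have hpt : ∀ x : Fin m,
        (-(1 / 2) * H x a z + (1 / 2 * if x = a then 1 else 0) * Θ 0 z) *
          (-(1 / 2) * H a x z + (1 / 2 * if a = x then 1 else 0) * Θ 0 z)
        = (1/4) * (H x a z * H a x z)
          + (if x = a then -(1/2) * (H a a z * Θ 0 z) + 1/4 * (Θ 0 z * Θ 0 z) else 0) := by
      intro x
      by_cases h : x = a
      · simp [h]; try ring
      · simp [h, Ne.symm h]; try ring
    rw [Finset.sum_congr rfl fun x _ => hpt x]
    simp only [Finset.sum_add_distrib, ← Finset.mul_sum, Finset.sum_ite_eq', Finset.mem_univ,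
      if_true]
  have sC1 : (∑ x : Fin m,
        (-(1 / 2) * H x a z + (1 / 2 * if x = a then 1 else 0) * Θ 0 z) *
          (-L a a x z + 1 / 2 * L x x x z + (1 / 2 * if a = x then 1 else 0) * L a a a z
            + 1 / 2 * Θ x.succ z + (1 / 2 * if a = x then 1 else 0) * Θ a.succ z))
      = (1/2) * (∑ k : Fin m, H k a z * L a a k z)
        + -(1/4) * (∑ k : Fin m, H k a z * L k k k z)
        + -(1/4) * (∑ k : Fin m, H k a z * Θ k.succ z)
        + (-(1/4) * (H a a z * L a a a z) + -(1/4) * (H a a z * Θ a.succ z)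
            + 1/2 * (Θ 0 z * Θ a.succ z)) := by
    have hpt : ∀ x : Fin m,
        (-(1 / 2) * H x a z + (1 / 2 * if x = a then 1 else 0) * Θ 0 z) *
          (-L a a x z + 1 / 2 * L x x x z + (1 / 2 * if a = x then 1 else 0) * L a a a z
            + 1 / 2 * Θ x.succ z + (1 / 2 * if a = x then 1 else 0) * Θ a.succ z)
        = (1/2) * (H x a z * L a a x z) + -(1/4) * (H x a z * L x x x z)
          + -(1/4) * (H x a z * Θ x.succ z)
          + (if x = a then -(1/4) * (H a a z * L a a a z) + -(1/4) * (H a a z * Θ a.succ z)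
              + 1/2 * (Θ 0 z * Θ a.succ z) else 0) := by
      intro x
      by_cases h : x = a
      · simp [h]; try ring
      · simp [h, Ne.symm h]; try ring
    rw [Finset.sum_congr rfl fun x _ => hpt x]
    simp only [Finset.sum_add_distrib, ← Finset.mul_sum, Finset.sum_ite_eq', Finset.mem_univ,
      if_true]
  have sC2 : (∑ x : Fin m,
        (-L x a a z + (1 / 2 * if x = a then 1 else 0) * L a a a z
            + (1 / 2 * if x = a then 1 else 0) * L a a a z
            + (1 / 2 * if x = a then 1 else 0) * Θ a.succ z
            + (1 / 2 * if x = a then 1 else 0) * Θ a.succ z) *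
          (-(1 / 2) * H a x z + (1 / 2 * if a = x then 1 else 0) * Θ 0 z))
      = (1/2) * (∑ k : Fin m, H a k z * L k a a z)
        + (-(1/2) * (H a a z * L a a a z) + -(1/2) * (H a a z * Θ a.succ z)
            + 1/2 * (Θ 0 z * Θ a.succ z)) := by
    have hpt : ∀ x : Fin m,
        (-L x a a z + (1 / 2 * if x = a then 1 else 0) * L a a a z
            + (1 / 2 * if x = a then 1 else 0) * L a a a z
            + (1 / 2 * if x = a then 1 else 0) * Θ a.succ z
            + (1 / 2 * if x = a then 1 else 0) * Θ a.succ z) *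
          (-(1 / 2) * H a x z + (1 / 2 * if a = x then 1 else 0) * Θ 0 z)
        = (1/2) * (H a x z * L x a a z)
          + (if x = a then -(1/2) * (H a a z * L a a a z) + -(1/2) * (H a a z * Θ a.succ z)
              + 1/2 * (Θ 0 z * Θ a.succ z) else 0) := by
      intro x
      by_cases h : x = a
      · simp [h]; try ring
      · simp [h, Ne.symm h]; try ring
    rw [Finset.sum_congr rfl fun x _ => hpt x]
    simp only [Finset.sum_add_distrib, ← Finset.mul_sum, Finset.sum_ite_eq', Finset.mem_univ,
      if_true]
  have sD1 : (∑ x : Fin m,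
        (-(1 / 2) * H x a z + (1 / 2 * if x = a then 1 else 0) * Θ 0 z) * M b x z)
      = -(1/2) * (∑ k : Fin m, H k a z * M b k z) + 1/2 * (Θ 0 z * M b a z) := by
    have hpt : ∀ x : Fin m,
        (-(1 / 2) * H x a z + (1 / 2 * if x = a then 1 else 0) * Θ 0 z) * M b x z
        = -(1/2) * (H x a z * M b x z)
          + (if x = a then 1/2 * (Θ 0 z * M b a z) else 0) := by
      intro x
      by_cases h : x = a
      · simp [h]; try ring
      · simp [h]; try ring
    rw [Finset.sum_congr rfl fun x _ => hpt x]
    simp only [Finset.sum_add_distrib, ← Finset.mul_sum, Finset.sum_ite_eq', Finset.mem_univ,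
      if_true]
  have sD2 : (∑ x : Fin m,
        (-L x a b z + (1 / 2 * if x = a then 1 else 0) * L b b b z
            + (1 / 2 * if x = b then 1 else 0) * L a a a z
            + (1 / 2 * if x = a then 1 else 0) * Θ b.succ z
            + (1 / 2 * if x = b then 1 else 0) * Θ a.succ z) *
          (1 / 2 * L x x x z + 1 / 2 * Θ x.succ z))
      = -(1/2) * (∑ k : Fin m, L k a b z * L k k k z)
        + -(1/2) * (∑ k : Fin m, L k a b z * Θ k.succ z)
        + (1/2 * L b b b z + 1/2 * Θ b.succ z) * (1/2 * L a a a z + 1/2 * Θ a.succ z)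
        + (1/2 * L a a a z + 1/2 * Θ a.succ z) * (1/2 * L b b b z + 1/2 * Θ b.succ z) := by
    have hpt : ∀ x : Fin m,
        (-L x a b z + (1 / 2 * if x = a then 1 else 0) * L b b b z
            + (1 / 2 * if x = b then 1 else 0) * L a a a z
            + (1 / 2 * if x = a then 1 else 0) * Θ b.succ z
            + (1 / 2 * if x = b then 1 else 0) * Θ a.succ z) *
          (1 / 2 * L x x x z + 1 / 2 * Θ x.succ z)
        = -(1/2) * (L x a b z * L x x x z) + -(1/2) * (L x a b z * Θ x.succ z)
          + (if x = a then (1/2 * L b b b z + 1/2 * Θ b.succ z)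
              * (1/2 * L a a a z + 1/2 * Θ a.succ z) else 0)
          + (if x = b then (1/2 * L a a a z + 1/2 * Θ a.succ z)
              * (1/2 * L b b b z + 1/2 * Θ b.succ z) else 0) := by
      intro x
      by_cases h : x = a
      · by_cases h' : x = b
        · have h2 : a = b := h ▸ h'
          simp [h, h2]; try ring
        · have h2 : ¬a = b := fun hh => h' (h.trans hh)
          simp [h, h2]; try ring
      · by_cases h' : x = b
        · have h3 : ¬b = a := fun hh => h (h'.trans hh)
          simp [h', h3]; try ring
        · simp [h, h']; try ring
    rw [Finset.sum_congr rfl fun x _ => hpt x]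
    simp only [Finset.sum_add_distrib, ← Finset.mul_sum, Finset.sum_ite_eq', Finset.mem_univ,
      if_true]
  rw [sA1, sA2] at EA
  rw [sB1, sB2] at EB
  rw [sC1, sC2] at EC
  rw [sD1, sD2] at ED
  refine ⟨?_, ?_, ?_, ?_⟩
  · linear_combination (-2 : ℝ) * EB
  · linear_combination (4/3 : ℝ) * EA - (2/3 : ℝ) * EC
  · linear_combination (2/3 : ℝ) * EA - (4/3 : ℝ) * EC
  · linear_combination (2 : ℝ) * ED - Θ 0 z * congrFun (hMsym b a) z
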